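/- Let R be a unital von Neumann regular ring. Then the map e ↦ eR is an order isomorphism from the Boolean algebra of central idempotents of R onto the center of the lattice L(R) of principal right ideals of R. -/
import Mathlib


section
variable {R : Type*} [Ring R]

/-- The principal right ideal `xR` of a ring `R`, as a set. -/
def rIdeal (x : R) : Set R := {y | ∃ r, y = x * r}

/-- A subset of `R` is a principal right ideal iff it is of the form `xR`. -/
def IsPrincRight (I : Set R) : Prop := ∃ x : R, I = rIdeal x

/-- The join (submodule sum) of two right ideals, as a set. -/
def idealSum (I J : Set R) : Set R := {z | ∃ a ∈ I, ∃ b ∈ J, z = a + b}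

/-- Subperspectivity in the lattice `L(R)` of principal right ideals:
`X ≲ U` iff there is a principal right ideal `Z` with `X ∩ Z = 0` and
`X ⊔ Z ⊆ U ⊔ Z`. -/
def SubperspIdeal (X U : Set R) : Prop :=
  ∃ Z : Set R, IsPrincRight Z ∧ X ∩ Z = {0} ∧ idealSum X Z ⊆ idealSum U Z

/-- An element of the lattice `L(R)` is central (= complemented and neutral)
iff it has a complement and every `X ∈ L(R)` with `X ≲ U` and `X ∩ U = 0` is
zero. -/
def IsCentralIdeal (U : Set R) : Prop :=
  (∃ V : Set R, IsPrincRight V ∧ idealSum U V = Set.univ ∧ U ∩ V = {0}) ∧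
  (∀ X : Set R, IsPrincRight X → SubperspIdeal X U → X ∩ U = {0} → X = {0})

end

section AuxLemmas
variable {R : Type*} [Ring R]

lemma zero_mem_rIdeal (x : R) : (0 : R) ∈ rIdeal x := ⟨0, (mul_zero x).symm⟩

lemma rIdeal_mul_mem {x y : R} (hy : y ∈ rIdeal x) (r : R) : y * r ∈ rIdeal x := by
  obtain ⟨s, rfl⟩ := hy
  exact ⟨s * r, mul_assoc _ _ _⟩

lemma rIdeal_sub_mem {x y z : R} (hy : y ∈ rIdeal x) (hz : z ∈ rIdeal x) :
    y - z ∈ rIdeal x := by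
  obtain ⟨s, rfl⟩ := hy
  obtain ⟨t, rfl⟩ := hz
  exact ⟨s - t, (mul_sub x s t).symm⟩

lemma mem_zero_of_inter {X Z : Set R} (h : X ∩ Z = {0}) {y : R}
    (hy : y ∈ X) (hz : y ∈ Z) : y = 0 := by
  have hmem : y ∈ X ∩ Z := ⟨hy, hz⟩
  rw [h] at hmem
  exact hmem

/-- The key "killing" lemma: if `X = aR` is subperspective to `uR` (witnessed by `Z = wR`)
and meets `uR` trivially, neutrality forces `a = 0`. -/
lemma kill {u a w : R}
    (hneut : ∀ X : Set R, IsPrincRight X → SubperspIdeal X (rIdeal u) →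
      X ∩ rIdeal u = {0} → X = {0})
    (huu : u * u = u) (hua : u * a = 0)
    (hXZ : ∀ s t : R, a * s = w * t → a * s = 0)
    (hd : u * (a - w) = a - w) : a = 0 := by
  have hsub : SubperspIdeal (rIdeal a) (rIdeal u) := by
    refine ⟨rIdeal w, ⟨w, rfl⟩, ?_, ?_⟩
    · apply Set.eq_singleton_iff_unique_mem.mpr
      refine ⟨⟨zero_mem_rIdeal a, zero_mem_rIdeal w⟩, ?_⟩
      rintro y ⟨⟨s, rfl⟩, ⟨t, ht⟩⟩
      exact hXZ s t ht
    · rintro y ⟨_, ⟨s, rfl⟩, _, ⟨t, rfl⟩, rfl⟩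
      refine ⟨u * ((a - w) * s), ⟨(a - w) * s, rfl⟩, w * (s + t), ⟨s + t, rfl⟩, ?_⟩
      rw [← mul_assoc, hd]
      noncomm_ring
  have hinter : rIdeal a ∩ rIdeal u = {0} := by
    apply Set.eq_singleton_iff_unique_mem.mpr
    refine ⟨⟨zero_mem_rIdeal a, zero_mem_rIdeal u⟩, ?_⟩
    rintro y ⟨⟨s, rfl⟩, ⟨t, ht⟩⟩
    have h1 : u * (a * s) = 0 := by rw [← mul_assoc, hua, zero_mul]
    have h2 : u * (a * s) = a * s := by rw [ht, ← mul_assoc, huu]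
    rw [h2] at h1
    exact h1
  have hX : rIdeal a = {0} := hneut _ ⟨a, rfl⟩ hsub hinter
  have : a ∈ rIdeal a := ⟨1, (mul_one a).symm⟩
  rw [hX] at this
  exact this

/-- If `uR` satisfies the neutrality condition then the idempotent `u` is central. -/
lemma comm_of_neut (hreg : ∀ x : R, ∃ y : R, x * y * x = x) {u : R} (huu : u * u = u)
    (hneut : ∀ X : Set R, IsPrincRight X → SubperspIdeal X (rIdeal u) →
      X ∩ rIdeal u = {0} → X = {0}) :
    ∀ r : R, u * r = r * u := by
  have part1 : ∀ r : R, r * u - u * (r * u) = 0 := by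
    intro r
    set a := r * u - u * (r * u) with ha
    have e1 : u * (u * (r * u)) = u * (r * u) := by rw [← mul_assoc, huu]
    have hua : u * a = 0 := by rw [ha, mul_sub, e1, sub_self]
    have e2 : (r * u) * u = r * u := by rw [mul_assoc, huu]
    have e3 : (u * (r * u)) * u = u * (r * u) := by rw [mul_assoc, e2]
    have hau : a * u = a := by rw [ha, sub_mul, e2, e3]
    have haa : a * a = 0 := by nth_rewrite 1 [← hau]; rw [mul_assoc, hua, mul_zero]
    set w := u + a with hw
    have hwa : w * a = 0 := by rw [hw, add_mul, hua, haa, add_zero]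
    have hww : w * w = w := by
      rw [hw, add_mul, mul_add, mul_add, huu, hua, hau, haa, add_zero, add_zero]
    have hXZ : ∀ s t : R, a * s = w * t → a * s = 0 := by
      intro s t h
      have h1 : w * (a * s) = 0 := by rw [← mul_assoc, hwa, zero_mul]
      have h2 : w * (w * t) = w * t := by rw [← mul_assoc, hww]
      rw [h, h2] at h1
      rw [h, h1]
    have hd : u * (a - w) = a - w := by
      have hne : a - w = -u := by rw [hw]; abel
      rw [hne, mul_neg, huu]
    exact kill hneut huu hua hXZ hd
  have part2 : ∀ r : R, u * r - (u * r) * u = 0 := by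
    intro r
    set b := u * r - (u * r) * u with hb
    have e1 : u * (u * r) = u * r := by rw [← mul_assoc, huu]
    have e2 : u * ((u * r) * u) = (u * r) * u := by rw [← mul_assoc, e1]
    have hub : u * b = b := by rw [hb, mul_sub, e1, e2]
    have e3 : ((u * r) * u) * u = (u * r) * u := by rw [mul_assoc, huu]
    have hbu : b * u = 0 := by rw [hb, sub_mul, e3, sub_self]
    have e4 : b * (u * r) = 0 := by rw [← mul_assoc, hbu, zero_mul]
    have e5 : b * ((u * r) * u) = 0 := by rw [← mul_assoc, e4, zero_mul]
    have hbb : b * b = 0 := by nth_rewrite 2 [hb]; rw [mul_sub, e4, e5, sub_self]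
    obtain ⟨c₀, hc₀⟩ := hreg b
    set c := c₀ - u * c₀ with hc
    have huc : u * c = 0 := by rw [hc, mul_sub, ← mul_assoc, huu, sub_self]
    have hbc : b * c = b * c₀ := by
      rw [hc, mul_sub, ← mul_assoc, hbu, zero_mul, sub_zero]
    set g := c * b with hg
    have hbg : b * g = b := by rw [hg, ← mul_assoc, hbc]; exact hc₀
    have hug : u * g = 0 := by rw [hg, ← mul_assoc, huc, zero_mul]
    have hXZ : ∀ s t : R, g * s = (g - b) * t → g * s = 0 := by
      intro s t h
      have h1 : u * (g * s) = 0 := by rw [← mul_assoc, hug, zero_mul]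
      have h2 : u * ((g - b) * t) = -(b * t) := by
        rw [← mul_assoc, mul_sub, hug, hub, zero_sub, neg_mul]
      rw [h, h2] at h1
      have hbt : b * t = 0 := neg_eq_zero.mp h1
      have hgt : g * t = 0 := by rw [hg, mul_assoc, hbt, mul_zero]
      rw [h, sub_mul, hbt, hgt, sub_zero]
    have hd : u * (g - (g - b)) = g - (g - b) := by
      rw [sub_sub_cancel, hub]
    have hg0 : g = 0 := kill hneut huu hug hXZ hd
    rw [← hbg, hg0, mul_zero]
  intro r
  have h1 := part1 r
  have h2 := part2 r
  have hkey : u * r - r * u = (u * r - (u * r) * u) - (r * u - u * (r * u)) := by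
    noncomm_ring
  have h3 : u * r - r * u = 0 := by rw [hkey, h1, h2, sub_zero]
  exact sub_eq_zero.mp h3

/-- Forward direction: the right ideal of a central idempotent is a central ideal. -/
lemma isCentral_rIdeal {e : R} (hec : ∀ r : R, e * r = r * e) (hee : e * e = e) :
    IsCentralIdeal (rIdeal e) := by
  constructor
  · refine ⟨rIdeal (1 - e), ⟨1 - e, rfl⟩, ?_, ?_⟩
    · ext y
      simp only [Set.mem_univ, iff_true]
      exact ⟨e * y, ⟨y, rfl⟩, (1 - e) * y, ⟨y, rfl⟩, by noncomm_ring⟩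
    · apply Set.eq_singleton_iff_unique_mem.mpr
      refine ⟨⟨zero_mem_rIdeal _, zero_mem_rIdeal _⟩, ?_⟩
      rintro y ⟨⟨s, rfl⟩, ⟨t, ht⟩⟩
      have h1 : e * (e * s) = e * s := by rw [← mul_assoc, hee]
      have h2 : e * ((1 - e) * t) = 0 := by
        rw [← mul_assoc, mul_sub, mul_one, hee, sub_self, zero_mul]
      calc e * s = e * (e * s) := h1.symm
        _ = e * ((1 - e) * t) := by rw [ht]
        _ = 0 := h2
  · intro X hX hsub hXU
    obtain ⟨x, rfl⟩ := hX
    obtain ⟨Z, ⟨z, rfl⟩, hXZ, hsum⟩ := hsub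
    apply Set.eq_singleton_iff_unique_mem.mpr
    refine ⟨zero_mem_rIdeal _, ?_⟩
    rintro y ⟨s, rfl⟩
    have hmem : x * s ∈ idealSum (rIdeal x) (rIdeal z) :=
      ⟨x * s, ⟨s, rfl⟩, 0, zero_mem_rIdeal z, (add_zero _).symm⟩
    obtain ⟨p, ⟨t1, rfl⟩, q, ⟨t2, rfl⟩, heq⟩ := hsum hmem
    have h5 : e * (e * t1) = e * t1 := by rw [← mul_assoc, hee]
    have h3 : e * (z * t2) = z * (e * t2) := by rw [← mul_assoc, hec z, mul_assoc]
    have h4 : x * s - e * (x * s) = z * (t2 - e * t2) := by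
      rw [heq, mul_add, h5, mul_sub, ← h3]
      abel
    have hXmem : x * s - e * (x * s) ∈ rIdeal x := by
      refine ⟨s - e * s, ?_⟩
      rw [mul_sub]
      congr 1
      rw [← mul_assoc, hec x, mul_assoc]
    have hZmem : x * s - e * (x * s) ∈ rIdeal z := ⟨t2 - e * t2, h4⟩
    have h0 : x * s - e * (x * s) = 0 := mem_zero_of_inter hXZ hXmem hZmem
    have hxe : x * s = e * (x * s) := by
      have := sub_eq_zero.mp h0
      exact this
    have hfin : x * s ∈ rIdeal x ∩ rIdeal e := ⟨⟨s, rfl⟩, ⟨x * s, hxe⟩⟩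
    rw [hXU] at hfin
    exact hfin

/-- Backward direction: a central principal right ideal is generated by a
central idempotent. -/
lemma exists_central_idem (hreg : ∀ x : R, ∃ y : R, x * y * x = x) {I : Set R}
    (hp : IsPrincRight I) (hc : IsCentralIdeal I) :
    ∃ u : R, (∀ r : R, u * r = r * u) ∧ u * u = u ∧ rIdeal u = I := by
  obtain ⟨x, rfl⟩ := hp
  obtain ⟨⟨V, ⟨z, rfl⟩, hsum, hint⟩, hneut⟩ := hc
  have h1 : (1 : R) ∈ idealSum (rIdeal x) (rIdeal z) := by rw [hsum]; trivial
  obtain ⟨p, hpI, q, hqV, hpq⟩ := h1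
  have uniq : ∀ i₁ ∈ rIdeal x, ∀ v₁ ∈ rIdeal z, ∀ i₂ ∈ rIdeal x, ∀ v₂ ∈ rIdeal z,
      i₁ + v₁ = i₂ + v₂ → i₁ = i₂ := by
    intro i₁ hi₁ v₁ hv₁ i₂ hi₂ v₂ hv₂ h
    have hd1 : i₁ - i₂ = v₂ - v₁ := by
      rw [sub_eq_sub_iff_add_eq_add, h, add_comm]
    have hd : i₁ - i₂ ∈ rIdeal x ∩ rIdeal z :=
      ⟨rIdeal_sub_mem hi₁ hi₂, hd1 ▸ rIdeal_sub_mem hv₂ hv₁⟩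
    rw [hint] at hd
    exact sub_eq_zero.mp hd
  have hdecomp : p * p + q * p = p + 0 := by
    rw [add_zero, ← add_mul, ← hpq, one_mul]
  have hpp : p * p = p :=
    uniq _ (rIdeal_mul_mem hpI p) _ (rIdeal_mul_mem hqV p) _ hpI _ (zero_mem_rIdeal z)
      hdecomp
  have hIeq : rIdeal x = rIdeal p := by
    ext y
    constructor
    · intro hy
      have hy2 : p * y + q * y = y + 0 := by
        rw [add_zero, ← add_mul, ← hpq, one_mul]
      have hpy : p * y = y :=
        uniq _ (rIdeal_mul_mem hpI y) _ (rIdeal_mul_mem hqV y) _ hy _ (zero_mem_rIdeal z)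
          hy2
      exact ⟨y, hpy.symm⟩
    · rintro ⟨r, rfl⟩
      exact rIdeal_mul_mem hpI r
  rw [hIeq] at hneut
  exact ⟨p, comm_of_neut hreg hpp hneut, hpp, hIeq.symm⟩

end AuxLemmas

/-- For a unital von Neumann regular ring `R`, the map
`e ↦ eR` is an order isomorphism from the Boolean algebra of central
idempotents of `R` (ordered by `e ≤ f ⇔ ef = e`) onto the center of the
lattice `L(R)`. -/
theorem stmt17 {R : Type*} [Ring R]
    (hreg : ∀ x : R, ∃ y : R, x * y * x = x) :
    ∃ φ : {e : R // e ∈ Set.center R ∧ e * e = e} ≃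
        {I : Set R // IsPrincRight I ∧ IsCentralIdeal I},
      (∀ e, (φ e : Set R) = rIdeal e.1) ∧
      (∀ e f : {e : R // e ∈ Set.center R ∧ e * e = e},
        e.1 * f.1 = e.1 ↔ (φ e : Set R) ⊆ (φ f : Set R)) := by
  classical
  let f : {e : R // e ∈ Set.center R ∧ e * e = e} →
      {I : Set R // IsPrincRight I ∧ IsCentralIdeal I} :=
    fun e => ⟨rIdeal e.1, ⟨e.1, rfl⟩,
      isCentral_rIdeal (fun r => (Semigroup.mem_center_iff.mp e.2.1 r).symm) e.2.2⟩
  have hinj : Function.Injective f := by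
    intro e e' h
    have h' : rIdeal e.1 = rIdeal e'.1 := congrArg Subtype.val h
    have he1 : e.1 ∈ rIdeal e'.1 := by rw [← h']; exact ⟨1, (mul_one _).symm⟩
    obtain ⟨r, hr⟩ := he1
    have hfe : e'.1 * e.1 = e.1 := by rw [hr, ← mul_assoc, e'.2.2]
    have hf1 : e'.1 ∈ rIdeal e.1 := by rw [h']; exact ⟨1, (mul_one _).symm⟩
    obtain ⟨s, hs⟩ := hf1
    have hef : e.1 * e'.1 = e'.1 := by rw [hs, ← mul_assoc, e.2.2]
    have hcomm : e.1 * e'.1 = e'.1 * e.1 :=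
      (Semigroup.mem_center_iff.mp e.2.1 e'.1).symm
    apply Subtype.ext
    calc e.1 = e'.1 * e.1 := hfe.symm
      _ = e.1 * e'.1 := hcomm.symm
      _ = e'.1 := hef
  have hsurj : Function.Surjective f := by
    rintro ⟨I, hp, hc⟩
    obtain ⟨u, hcomm, huu, hIu⟩ := exists_central_idem hreg hp hc
    exact ⟨⟨u, Semigroup.mem_center_iff.mpr (fun g => (hcomm g).symm), huu⟩,
      Subtype.ext hIu⟩
  refine ⟨Equiv.ofBijective f ⟨hinj, hsurj⟩, fun e => rfl, ?_⟩
  intro e e'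
  constructor
  · intro h y hy
    have hy' : y ∈ rIdeal e.1 := hy
    obtain ⟨r, rfl⟩ := hy'
    show e.1 * r ∈ rIdeal e'.1
    have hfe : e'.1 * e.1 = e.1 := by
      rw [← Semigroup.mem_center_iff.mp e'.2.1 e.1, h]
    exact ⟨e.1 * r, by rw [← mul_assoc, hfe]⟩
  · intro h
    have he : e.1 ∈ (Equiv.ofBijective f ⟨hinj, hsurj⟩ e : Set R) :=
      ⟨1, (mul_one _).symm⟩
    have hmem : e.1 ∈ rIdeal e'.1 := h he
    obtain ⟨r, hr⟩ := hmem
    have hfe : e'.1 * e.1 = e.1 := by rw [hr, ← mul_assoc, e'.2.2]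
    calc e.1 * e'.1 = e'.1 * e.1 := (Semigroup.mem_center_iff.mp e.2.1 e'.1).symm
      _ = e.1 := hfe
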